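/- If Δ ≥ 100·ln(n)/ε⁴ and n ≥ ε^{−2}, then with probability at least 1 − 1/n^{14}, simultaneously for every vertex u ∈ V and every i ∈ {1, …, T}: |{e ∈ N(u) : X_e = i}| < (ε + ε²)(1 − ε)^{i−1}·Δ. -/

import Mathlib

open MeasureTheory ProbabilityTheory Real
open scoped ENNReal

lemma aux_expA {ε : ℝ} (h0 : 0 < ε) (h1 : ε ≤ 1/10) :
    Real.exp ε ≤ 1 + ε + 0.53 * ε ^ 2 := by
  have h := Real.exp_bound' h0.le (by linarith) (n := 3) (by norm_num)
  have hs : (∑ m ∈ Finset.range 3, ε ^ m / m.factorial) = 1 + ε + ε^2/2 := by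
    simp [Finset.sum_range_succ, Nat.factorial]
  rw [hs] at h
  have h2 : ε^3 ≤ (1/10) * ε^2 := by nlinarith
  have h3 : (1:ℝ) + ε + ε^2/2 + ε ^ 3 * ((3:ℕ)+1)/((3:ℕ).factorial * (3:ℕ)) ≤ 1 + ε + 0.53*ε^2 := by
    norm_num [Nat.factorial]
    nlinarith
  calc Real.exp ε ≤ _ := h
    _ ≤ 1 + ε + 0.53 * ε ^ 2 := h3

lemma aux_log_le {x : ℝ} (hx : 0 < x) : Real.log x ≤ 2 * Real.sqrt x := by
  have h := Real.log_le_sub_one_of_pos (Real.sqrt_pos.mpr hx)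
  rw [Real.log_sqrt hx.le] at h
  nlinarith [Real.sqrt_nonneg x]

lemma aux_exp071 : Real.exp 0.71 ≤ 25/12 := by
  have h := Real.exp_bound' (x := 0.71) (by norm_num) (by norm_num) (n := 5) (by norm_num)
  have hs : (∑ m ∈ Finset.range 5, (0.71:ℝ) ^ m / m.factorial) = 1 + 0.71 + 0.71^2/2 + 0.71^3/6 + 0.71^4/24 := by
    simp [Finset.sum_range_succ, Nat.factorial]
  rw [hs] at h
  have h3 : (1:ℝ) + 0.71 + 0.71^2/2 + 0.71^3/6 + 0.71^4/24 + 0.71 ^ 5 * ((5:ℕ)+1)/((5:ℕ).factorial * (5:ℕ)) ≤ 25/12 := by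
    norm_num [Nat.factorial]
  calc Real.exp 0.71 ≤ _ := h
    _ ≤ 25/12 := h3

lemma aux_pow_ge {ε : ℝ} (h0 : 0 < ε) (h1 : ε ≤ 1/10) (T : ℕ)
    (hT : (T : ℝ) ≤ (1/ε) * Real.log (1/ε)) :
    0.48 * ε ≤ (1 - ε) ^ T := by
  have hε1 : (0:ℝ) < 1 - ε := by linarith
  have hlog1ε : 0 ≤ Real.log (1/ε) := Real.log_nonneg (by rw [le_div_iff₀ h0]; linarith)
  have hpow : (1 - ε)^T = Real.exp (T * Real.log (1-ε)) := by
    rw [← Real.log_pow, Real.exp_log (pow_pos hε1 T)]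
  have hlb : -(ε/(1-ε)) ≤ Real.log (1-ε) := by
    have h := Real.log_le_sub_one_of_pos (x := 1/(1-ε)) (by positivity)
    rw [Real.log_div one_ne_zero hε1.ne', Real.log_one] at h
    have he : (1:ℝ)/(1-ε) - 1 = ε/(1-ε) := by field_simp; ring
    rw [he] at h; linarith
  have hlogneg : Real.log (1-ε) ≤ 0 := Real.log_nonpos (by linarith) (by linarith)
  set C : ℝ := (1/ε) * Real.log (1/ε) with hC
  have hTll : -(Real.log (1/ε) / (1-ε)) ≤ (T:ℝ) * Real.log (1-ε) := by
    calc -(Real.log (1/ε)/(1-ε)) = C * (-(ε/(1-ε))) := by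
          rw [hC]; field_simp
      _ ≤ C * Real.log (1-ε) := mul_le_mul_of_nonneg_left hlb (by positivity)
      _ ≤ (T:ℝ) * Real.log (1-ε) := mul_le_mul_of_nonpos_right hT hlogneg
  have hkey : -(Real.log (1/ε)/(1-ε)) = Real.log ε - (ε/(1-ε)) * Real.log (1/ε) := by
    rw [Real.log_div one_ne_zero h0.ne', Real.log_one]
    field_simp; ring
  -- (ε/(1-ε)) * log(1/ε) ≤ 0.71
  have hεlog : ε * Real.log (1/ε) ≤ 2 * Real.sqrt ε := by
    have h := aux_log_le (x := 1/ε) (by positivity)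
    have h2 : ε * Real.log (1/ε) ≤ ε * (2 * Real.sqrt (1/ε)) :=
      mul_le_mul_of_nonneg_left h h0.le
    have h3 : ε * (2 * Real.sqrt (1/ε)) = 2 * Real.sqrt ε := by
      rw [one_div, Real.sqrt_inv, ← Real.div_sqrt]
      field_simp
      rw [Real.sq_sqrt h0.le]
    linarith [h3 ▸ h2]
  have hsq : Real.sqrt ε ≤ Real.sqrt (1/10) := Real.sqrt_le_sqrt h1
  have hsq10 : Real.sqrt (1/10) ≤ 0.3195 := by
    nlinarith [Real.sq_sqrt (show (0:ℝ) ≤ 1/10 by norm_num), Real.sqrt_nonneg (1/10:ℝ)]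
  have hs071 : (ε/(1-ε)) * Real.log (1/ε) ≤ 0.71 := by
    have : (ε/(1-ε)) * Real.log (1/ε) = (1/(1-ε)) * (ε * Real.log (1/ε)) := by ring
    rw [this]
    have h4 : ε * Real.log (1/ε) ≤ 2 * 0.3195 := by linarith
    have h5 : (1/(1-ε)) ≤ 10/9 := by
      rw [div_le_div_iff₀ hε1 (by norm_num)]; linarith
    have h6 : 0 ≤ ε * Real.log (1/ε) := by positivity
    nlinarith
  have hfin : Real.log ε - 0.71 ≤ (T:ℝ) * Real.log (1-ε) := by
    rw [hkey] at hTll; linarith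
  have hexp : Real.exp (Real.log ε - 0.71) ≤ (1-ε)^T := by
    rw [hpow]; exact Real.exp_le_exp.mpr hfin
  have heq : Real.exp (Real.log ε - 0.71) = ε * (Real.exp 0.71)⁻¹ := by
    rw [Real.exp_sub, Real.exp_log h0]; ring
  rw [heq] at hexp
  have h071 : (0.48:ℝ) ≤ (Real.exp 0.71)⁻¹ := by
    rw [le_inv_comm₀ (by norm_num) (Real.exp_pos _)]
    exact aux_exp071.trans (by norm_num)
  nlinarith [hexp, h071, mul_le_mul_of_nonneg_left h071 h0.le, Real.exp_pos (0.71:ℝ)]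

lemma chernoff_core {Ω : Type*} [MeasurableSpace Ω] {μ : Measure Ω} [IsProbabilityMeasure μ]
    {ι : Type*} (Y : ι → Ω → ℝ) (s : Finset ι)
    (hindep : iIndepFun Y μ)
    (hmeas : ∀ j, Measurable (Y j))
    (hval : ∀ j, ∀ ω, Y j ω = 0 ∨ Y j ω = 1)
    (p t a : ℝ) (hp0 : 0 ≤ p)
    (hp : ∀ j ∈ s, (μ {ω | Y j ω = 1}).toReal = p)
    (ht : 0 ≤ t) :
    (μ {ω | a ≤ ∑ j ∈ s, Y j ω}).toReal ≤
      Real.exp (-t * a + s.card * (p * (Real.exp t - 1))) := by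
  classical
  set A : ι → Set Ω := fun j => {ω | Y j ω = 1} with hA
  have hAmeas : ∀ j, MeasurableSet (A j) := fun j => (hmeas j) (measurableSet_singleton 1)
  have hf : ∀ j, (fun ω => Real.exp (t * Y j ω)) =
      fun ω => (A j).indicator (fun _ => Real.exp t - 1) ω + 1 := by
    intro j
    funext ω
    rcases hval j ω with h | h
    · have : ω ∉ A j := by simp [hA, h]
      simp [h, Set.indicator_of_notMem this]
    · have : ω ∈ A j := by simp [hA, h]
      simp [h, Set.indicator_of_mem this]
  have hint : ∀ j, Integrable (fun ω => Real.exp (t * Y j ω)) μ := by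
    intro j
    rw [hf j]
    exact ((integrable_const _).indicator (hAmeas j)).add (integrable_const 1)
  have hmgf : ∀ j ∈ s, mgf (Y j) μ t = p * (Real.exp t - 1) + 1 := by
    intro j hj
    rw [mgf, hf j, integral_add ((integrable_const _).indicator (hAmeas j)) (integrable_const 1),
      integral_indicator_const _ (hAmeas j), integral_const]
    simp [hp j hj, mul_comm]
    rw [measureReal_def, show A j = {ω | Y j ω = 1} from rfl, hp j hj]; ring
  have hprod : mgf (∑ j ∈ s, Y j) μ t = (p * (Real.exp t - 1) + 1) ^ s.card := by
    rw [hindep.mgf_sum hmeas s, Finset.prod_congr rfl hmgf, Finset.prod_const]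
  have hle : mgf (∑ j ∈ s, Y j) μ t ≤ Real.exp (s.card * (p * (Real.exp t - 1))) := by
    rw [hprod]
    calc (p * (Real.exp t - 1) + 1) ^ s.card ≤ (Real.exp (p * (Real.exp t - 1))) ^ s.card := by
          apply pow_le_pow_left₀ _ (Real.add_one_le_exp _)
          have : (1:ℝ) ≤ Real.exp t := by
            rw [← Real.exp_zero]; exact Real.exp_le_exp.mpr ht
          nlinarith
      _ = Real.exp (s.card * (p * (Real.exp t - 1))) := by
          rw [← Real.exp_nat_mul]
  have hcher := measure_ge_le_exp_mul_mgf (μ := μ) (X := ∑ j ∈ s, Y j) a ht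
    (hindep.integrable_exp_mul_sum hmeas (fun j _ => hint j))
  have he : {ω | a ≤ (∑ j ∈ s, Y j) ω} = {ω | a ≤ ∑ j ∈ s, Y j ω} := by
    simp [Finset.sum_apply]
  rw [he] at hcher
  calc (μ {ω | a ≤ ∑ j ∈ s, Y j ω}).toReal ≤ Real.exp (-t * a) * mgf (∑ j ∈ s, Y j) μ t := hcher
    _ ≤ Real.exp (-t * a) * Real.exp (s.card * (p * (Real.exp t - 1))) := by
        apply mul_le_mul_of_nonneg_left hle (Real.exp_pos _).le
    _ = Real.exp (-t * a + s.card * (p * (Real.exp t - 1))) := (Real.exp_add _ _).symm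

set_option maxHeartbeats 1600000 in
theorem stmt_10 {V : Type*} [Fintype V] [DecidableEq V]
    (G : SimpleGraph V) [DecidableRel G.Adj]
    {Ω : Type*} [MeasurableSpace Ω] (μ : Measure Ω) [IsProbabilityMeasure μ]
    (ε Δ : ℝ) (hε0 : 0 < ε) (hε1 : ε ≤ 1 / 10)
    (T : ℕ) (hT : T = ⌊(1 / ε) * Real.log (1 / ε)⌋₊)
    (n : ℕ) (hn : n = Fintype.card V)
    (hdeg : ∀ u : V, (G.degree u : ℝ) ≤ Δ)
    (hΔ : Δ ≥ 100 * Real.log n / ε ^ 4)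
    (hnε : (n : ℝ) ≥ 1 / ε ^ 2)
    (X : Sym2 V → Ω → ℕ)
    (hmeas : ∀ e, Measurable (X e))
    (hindep : iIndepFun
      (fun e : G.edgeSet => X e) μ)
    (hdist : ∀ e ∈ G.edgeSet, ∀ i : ℕ, 1 ≤ i → i ≤ T →
      μ {ω | X e ω = i} = ENNReal.ofReal (ε * (1 - ε) ^ (i - 1)))
    (hdistT : ∀ e ∈ G.edgeSet, μ {ω | X e ω = T + 1} = ENNReal.ofReal ((1 - ε) ^ T)) :
    ENNReal.ofReal (1 - 1 / (n : ℝ) ^ 14) ≤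
      μ {ω | ∀ u : V, ∀ i : ℕ, 1 ≤ i → i ≤ T →
        (({e | e ∈ G.incidenceSet u ∧ X e ω = i}.ncard : ℝ)) <
          (ε + ε ^ 2) * (1 - ε) ^ (i - 1) * Δ} := by
  classical
  -- basic facts
  have hε1' : (0:ℝ) < 1 - ε := by linarith
  have hnR : (100:ℝ) ≤ (n:ℝ) := by
    have : (100:ℝ) ≤ 1 / ε^2 := by
      rw [le_div_iff₀ (by positivity)]; nlinarith
    linarith
  have hnR0 : (0:ℝ) < (n:ℝ) := by linarith
  have hn1 : (1:ℝ) ≤ (n:ℝ) := by linarith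
  have hlogn : 0 ≤ Real.log n := Real.log_nonneg hn1
  have hΔ0 : 0 ≤ Δ := le_trans (by positivity) hΔ
  have hlog1ε0 : 0 ≤ Real.log (1/ε) := Real.log_nonneg (by rw [le_div_iff₀ hε0]; linarith)
  have hTle : (T:ℝ) ≤ (1/ε) * Real.log (1/ε) := by
    rw [hT]; exact Nat.floor_le (by positivity)
  have hlog1ε : Real.log (1/ε) ≤ 1/ε := by
    have := Real.log_le_sub_one_of_pos (x := 1/ε) (by positivity)
    linarith
  have hTn : (T:ℝ) ≤ (n:ℝ) := by
    calc (T:ℝ) ≤ (1/ε) * Real.log (1/ε) := hTle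
      _ ≤ (1/ε) * (1/ε) := by
          apply mul_le_mul_of_nonneg_left hlog1ε (by positivity)
      _ = 1/ε^2 := by ring
      _ ≤ (n:ℝ) := hnε
  -- the indicator variables
  set Z : ℕ → G.edgeSet → Ω → ℝ :=
    fun i e ω => if X (e : Sym2 V) ω = i then 1 else 0 with hZ
  set s : V → Finset G.edgeSet :=
    fun u => Finset.univ.filter (fun e => (e : Sym2 V) ∈ G.incidenceSet u) with hs
  have hZmeas : ∀ i (e : G.edgeSet), Measurable (Z i e) := by
    intro i e
    exact (measurable_from_top (f := fun m : ℕ => if m = i then (1:ℝ) else 0)).comp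
      (hmeas (e : Sym2 V))
  have hZval : ∀ i (e : G.edgeSet) ω, Z i e ω = 0 ∨ Z i e ω = 1 := by
    intro i e ω; by_cases h : X (e : Sym2 V) ω = i <;> simp [hZ, h]
  have hZindep : ∀ i, iIndepFun (Z i) μ := by
    intro i
    exact hindep.comp (fun _ m => if m = i then (1:ℝ) else 0)
      (fun _ => measurable_from_top)
  -- the count identity
  have hcount : ∀ (u : V) (i : ℕ) (ω : Ω),
      ({e | e ∈ G.incidenceSet u ∧ X e ω = i}.ncard : ℝ) = ∑ e ∈ s u, Z i e ω := by
    intro u i ω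
    have h1 : {e | e ∈ G.incidenceSet u ∧ X e ω = i} =
        ↑(G.edgeFinset.filter (fun e => e ∈ G.incidenceSet u ∧ X e ω = i)) := by
      ext e
      simp only [Set.mem_setOf_eq, Finset.coe_filter, SimpleGraph.mem_edgeFinset]
      exact ⟨fun h => ⟨G.incidenceSet_subset u h.1, h⟩, fun h => h.2⟩
    rw [h1, Set.ncard_coe_finset, Finset.card_filter]
    push_cast
    rw [hs]
    rw [Finset.sum_filter]
    rw [Finset.sum_subtype G.edgeFinset (fun x => SimpleGraph.mem_edgeFinset)
      (fun e => if e ∈ G.incidenceSet u ∧ X e ω = i then (1:ℝ) else 0)]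
    apply Finset.sum_congr rfl
    intro e _
    by_cases h1 : (e : Sym2 V) ∈ G.incidenceSet u <;>
      by_cases h2 : X (e : Sym2 V) ω = i <;> simp [hZ, h1, h2]
  -- bad events
  set B : V → ℕ → Set Ω :=
    fun u i => {ω | (ε + ε^2) * (1-ε)^(i-1) * Δ ≤ ∑ e ∈ s u, Z i e ω} with hB
  have hBmeas : ∀ u i, MeasurableSet (B u i) := by
    intro u i
    exact measurableSet_le measurable_const (Finset.measurable_sum _ (fun e _ => hZmeas i e))
  -- card bound
  have hcard : ∀ u : V, ((s u).card : ℝ) ≤ Δ := by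
    intro u
    have h1 : (s u).card ≤ (G.incidenceFinset u).card := by
      refine Finset.card_le_card_of_injOn (fun e => (e : Sym2 V)) ?_ ?_
      · intro e he
        rw [Finset.mem_coe, SimpleGraph.mem_incidenceFinset]
        rw [hs] at he
        exact (Finset.mem_filter.mp he).2
      · exact Subtype.coe_injective.injOn
    have h2 := G.card_incidenceFinset_eq_degree u
    calc ((s u).card : ℝ) ≤ ((G.incidenceFinset u).card : ℝ) := by exact_mod_cast h1
      _ = (G.degree u : ℝ) := by rw [h2]
      _ ≤ Δ := hdeg u
  -- per pair bound
  have hεΔ : 100 * Real.log n ≤ ε^4 * Δ := by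
    rw [ge_iff_le, div_le_iff₀ (by positivity)] at hΔ
    linarith
  have hpair : ∀ u : V, ∀ i : ℕ, 1 ≤ i → i ≤ T →
      μ (B u i) ≤ ENNReal.ofReal (Real.exp (-(16:ℝ) * Real.log n)) := by
    intro u i hi1 hi2
    set p : ℝ := ε * (1-ε)^(i-1) with hp
    have hp0 : 0 ≤ p := by positivity
    have hpvals : ∀ e ∈ s u, (μ {ω | Z i e ω = 1}).toReal = p := by
      intro e he
      have hset : {ω | Z i e ω = 1} = {ω | X (e : Sym2 V) ω = i} := by
        ext ω; by_cases h : X (e : Sym2 V) ω = i <;> simp [hZ, h]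
      rw [hset, hdist (e : Sym2 V) e.2 i hi1 hi2, ENNReal.toReal_ofReal hp0]
    have hcher := chernoff_core (Z i) (s u) (hZindep i) (hZmeas i) (hZval i)
      p ε ((ε + ε^2) * (1-ε)^(i-1) * Δ) hp0 hpvals hε0.le
    have hexpge : (1:ℝ) ≤ Real.exp ε := by
      rw [← Real.exp_zero]; exact Real.exp_le_exp.mpr hε0.le
    have hple : ((s u).card : ℝ) * (p * (Real.exp ε - 1)) ≤ Δ * (p * (Real.exp ε - 1)) := by
      apply mul_le_mul_of_nonneg_right (hcard u)
      have h9 : 0 ≤ Real.exp ε - 1 := by linarith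
      positivity
    have hpgeq : 0.48 * ε^2 ≤ p := by
      have h1 : (1-ε)^T ≤ (1-ε)^(i-1) :=
        pow_le_pow_of_le_one hε1'.le (by linarith) (by omega)
      have h2 := aux_pow_ge hε0 hε1 T hTle
      calc (0.48:ℝ) * ε^2 = ε * (0.48 * ε) := by ring
        _ ≤ ε * (1-ε)^T := mul_le_mul_of_nonneg_left h2 hε0.le
        _ ≤ ε * (1-ε)^(i-1) := mul_le_mul_of_nonneg_left h1 hε0.le
    have hkey : -ε * ((ε + ε^2) * (1-ε)^(i-1) * Δ) + Δ * (p * (Real.exp ε - 1)) ≤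
        -(16:ℝ) * Real.log n := by
      have e1 : -ε * ((ε + ε^2) * (1-ε)^(i-1) * Δ) + Δ * (p * (Real.exp ε - 1)) =
          Δ * p * (Real.exp ε - 1 - ε - ε^2) := by
        rw [hp]; ring
      rw [e1]
      have hA := aux_expA hε0 hε1
      have e2 : Real.exp ε - 1 - ε - ε^2 ≤ -(0.45*ε^2) := by nlinarith
      have e3 : 0 ≤ Δ * p := by positivity
      calc Δ * p * (Real.exp ε - 1 - ε - ε^2) ≤ Δ * p * (-(0.45*ε^2)) :=
            mul_le_mul_of_nonneg_left e2 e3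
        _ = -(0.45 * ε^2 * (Δ * p)) := by ring
        _ ≤ -(16 * Real.log n) := by
            have h4 : 0.45*ε^2*(Δ*(0.48*ε^2)) ≤ 0.45*ε^2*(Δ*p) := by
              apply mul_le_mul_of_nonneg_left (mul_le_mul_of_nonneg_left hpgeq hΔ0)
                (by positivity)
            nlinarith
        _ = -(16:ℝ) * Real.log n := by ring
    have hfinal : (μ (B u i)).toReal ≤ Real.exp (-(16:ℝ) * Real.log n) := by
      calc (μ (B u i)).toReal
          ≤ Real.exp (-ε * ((ε + ε^2) * (1-ε)^(i-1) * Δ) +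
              ((s u).card : ℝ) * (p * (Real.exp ε - 1))) := hcher
        _ ≤ Real.exp (-(16:ℝ) * Real.log n) := by
            apply Real.exp_le_exp.mpr
            linarith
    calc μ (B u i) = ENNReal.ofReal ((μ (B u i)).toReal) :=
          (ENNReal.ofReal_toReal (measure_ne_top μ _)).symm
      _ ≤ ENNReal.ofReal (Real.exp (-(16:ℝ) * Real.log n)) :=
          ENNReal.ofReal_le_ofReal hfinal
  -- union bound
  set Bad : Set Ω := ⋃ u : V, ⋃ i ∈ Finset.Icc 1 T, B u i with hBad
  have hBadmeas : MeasurableSet Bad := by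
    apply MeasurableSet.iUnion
    intro u
    exact MeasurableSet.biUnion ((Finset.Icc 1 T) : Finset ℕ).countable_toSet
      (fun i _ => hBmeas u i)
  have hExp : Real.exp (-(16:ℝ) * Real.log n) = (((n:ℝ))^16)⁻¹ := by
    have h1 : -(16:ℝ) * Real.log n = -(Real.log ((n:ℝ)^16)) := by
      rw [Real.log_pow]; push_cast; ring
    rw [h1, Real.exp_neg, Real.exp_log (by positivity)]
  have hBadle : μ Bad ≤ ENNReal.ofReal (1/(n:ℝ)^14) := by
    have h1 : μ Bad ≤ ∑ u : V, ∑ i ∈ Finset.Icc 1 T, μ (B u i) := by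
      calc μ Bad ≤ ∑' u : V, μ (⋃ i ∈ Finset.Icc 1 T, B u i) := measure_iUnion_le _
        _ = ∑ u : V, μ (⋃ i ∈ Finset.Icc 1 T, B u i) := tsum_fintype _
        _ ≤ ∑ u : V, ∑ i ∈ Finset.Icc 1 T, μ (B u i) :=
            Finset.sum_le_sum (fun u _ => measure_biUnion_finset_le _ _)
    have h2 : ∑ u : V, ∑ i ∈ Finset.Icc 1 T, μ (B u i) ≤
        (n : ℝ≥0∞) * ((T : ℝ≥0∞) * ENNReal.ofReal (Real.exp (-(16:ℝ) * Real.log n))) := by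
      calc ∑ u : V, ∑ i ∈ Finset.Icc 1 T, μ (B u i)
          ≤ ∑ _u : V, ∑ _i ∈ Finset.Icc 1 T,
              ENNReal.ofReal (Real.exp (-(16:ℝ) * Real.log n)) := by
            apply Finset.sum_le_sum; intro u _
            apply Finset.sum_le_sum; intro i hi
            rw [Finset.mem_Icc] at hi
            exact hpair u i hi.1 hi.2
        _ = (Fintype.card V : ℝ≥0∞) * ((T : ℝ≥0∞) *
              ENNReal.ofReal (Real.exp (-(16:ℝ) * Real.log n))) := by
            simp [Finset.sum_const, Nat.card_Icc, mul_assoc]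
        _ = (n : ℝ≥0∞) * ((T : ℝ≥0∞) *
              ENNReal.ofReal (Real.exp (-(16:ℝ) * Real.log n))) := by rw [hn]
    have h3 : (n : ℝ≥0∞) * ((T : ℝ≥0∞) * ENNReal.ofReal (Real.exp (-(16:ℝ) * Real.log n))) ≤
        ENNReal.ofReal (1/(n:ℝ)^14) := by
      rw [hExp, ← ENNReal.ofReal_natCast n, ← ENNReal.ofReal_natCast T,
        ← ENNReal.ofReal_mul (by positivity), ← ENNReal.ofReal_mul (by positivity)]
      apply ENNReal.ofReal_le_ofReal
      have h4 : (n:ℝ) * ((T:ℝ) * ((n:ℝ)^16)⁻¹) ≤ (n:ℝ) * ((n:ℝ) * ((n:ℝ)^16)⁻¹) := by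
        apply mul_le_mul_of_nonneg_left _ (by positivity)
        apply mul_le_mul_of_nonneg_right hTn (by positivity)
      have h5 : (n:ℝ) * ((n:ℝ) * ((n:ℝ)^16)⁻¹) = 1/(n:ℝ)^14 := by
        field_simp
      linarith
    exact h1.trans (h2.trans h3)
  -- final
  have hsub : Badᶜ ⊆ {ω | ∀ u : V, ∀ i : ℕ, 1 ≤ i → i ≤ T →
      (({e | e ∈ G.incidenceSet u ∧ X e ω = i}.ncard : ℝ)) <
        (ε + ε ^ 2) * (1 - ε) ^ (i - 1) * Δ} := by
    intro ω hω
    intro u i hi1 hi2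
    by_contra hcon
    push_neg at hcon
    apply hω
    rw [hBad]
    refine Set.mem_iUnion.mpr ⟨u, Set.mem_iUnion₂.mpr ⟨i, Finset.mem_Icc.mpr ⟨hi1, hi2⟩, ?_⟩⟩
    rw [hB]
    show (ε + ε^2) * (1-ε)^(i-1) * Δ ≤ ∑ e ∈ s u, Z i e ω
    rw [← hcount u i ω]
    exact hcon
  calc ENNReal.ofReal (1 - 1/(n:ℝ)^14)
      = 1 - ENNReal.ofReal (1/(n:ℝ)^14) := by
        rw [ENNReal.ofReal_sub _ (by positivity), ENNReal.ofReal_one]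
    _ ≤ 1 - μ Bad := tsub_le_tsub_left hBadle 1
    _ = μ Badᶜ := (prob_compl_eq_one_sub hBadmeas).symm
    _ ≤ _ := measure_mono hsub
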